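/- Let n ≥ 1, ρ ∈ (0, 1) and M > 0. Let F : ℝ → ℂⁿ be 2π-periodic and continuous on ℝ, and twice continuously differentiable on [−π, π] ∖ {0}, with ‖F′(θ)‖ ≤ M·|θ|^{ρ−1} and ‖F″(θ)‖ ≤ M·|θ|^{ρ−2} for all θ ∈ [−π, π] ∖ {0}. Then there is a constant C depending only on M and ρ such that for every nonzero integer h, ‖∫_{−π}^{π} F(θ)·e^{−ihθ} dθ‖ ≤ C·|h|^{−1−ρ}. -/

import Mathlib

open MeasureTheory Set Topology Filter
open scoped Real

section aux
variable {E : Type*} [NormedAddCommGroup E] [NormedSpace ℝ E]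

/-- The domain where derivative information is available. -/
private def Dom : Set ℝ := Set.Icc (-π) π \ {0}

private lemma mem_Dom {x : ℝ} (h1 : -π ≤ x) (h2 : x ≤ π) (h3 : x ≠ 0) : x ∈ Dom :=
  ⟨⟨h1, h2⟩, h3⟩

/-- Core positive-side cusp Hölder estimate. -/
private lemma cusp_pos (ρ M : ℝ) (hρ : ρ ∈ Set.Ioo (0:ℝ) 1) (hM : 0 < M)
    (F F' : ℝ → E) (hcont : Continuous F)
    (hF' : ∀ θ ∈ Dom, HasDerivWithinAt F (F' θ) Dom θ)
    (hb : ∀ θ ∈ Dom, ‖F' θ‖ ≤ M * |θ| ^ (ρ - 1)) :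
    ∀ b ∈ Set.Ioc (0:ℝ) π, ‖F b - F 0‖ ≤ (M/ρ) * b ^ ρ := by
  obtain ⟨hρ0, hρ1⟩ := hρ
  intro b hbmem
  obtain ⟨hb0, hbπ⟩ := hbmem
  -- step estimate for ε > 0
  have key : ∀ ε ∈ Set.Ioc (0:ℝ) b, ‖F b - F ε‖ ≤ (M/ρ) * (b ^ ρ - ε ^ ρ) := by
    intro ε ⟨hε0, hεb⟩
    have main : ∀ x ∈ Set.Icc ε b, ‖F x - F ε‖ ≤ (M/ρ) * (x ^ ρ - ε ^ ρ) := by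
      intro x hx
      refine image_norm_le_of_norm_deriv_right_le_deriv_boundary'
        (f := fun x => F x - F ε) (f' := F') (B := fun x => (M/ρ) * (x ^ ρ - ε ^ ρ))
        (B' := fun x => M * x ^ (ρ - 1)) (hcont.continuousOn.sub continuousOn_const)
        ?_ (by simp [Real.rpow_natCast]) ?_ ?_ ?_ hx
      · intro y hy
        have hy0 : (0:ℝ) < y := lt_of_lt_of_le hε0 hy.1
        have hyD : y ∈ Dom := mem_Dom (by linarith [Real.pi_pos]) (le_trans (le_of_lt hy.2) hbπ) (ne_of_gt hy0)
        have hmem : Dom ∈ 𝓝[Set.Ici y] y := by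
          refine mem_nhdsWithin.2 ⟨Set.Ioo 0 π, isOpen_Ioo, ⟨hy0, lt_of_lt_of_le hy.2 hbπ⟩, ?_⟩
          rintro z ⟨⟨hz0, hz1⟩, -⟩
          exact mem_Dom (by linarith [Real.pi_pos]) hz1.le (ne_of_gt hz0)
        simpa using ((hF' y hyD).mono_of_mem_nhdsWithin hmem)
      · have hc : ContinuousOn (fun x:ℝ => x ^ ρ) (Icc ε b) :=
          fun x _ => (Real.continuousAt_rpow_const x ρ (Or.inr hρ0.le)).continuousWithinAt
        exact continuousOn_const.mul (hc.sub continuousOn_const)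
      · intro y hy
        have hy0 : (0:ℝ) < y := lt_of_lt_of_le hε0 hy.1
        have : HasDerivAt (fun x : ℝ => (M/ρ) * (x ^ ρ - ε ^ ρ)) (M/ρ * (ρ * y ^ (ρ-1))) y := by
          exact (((Real.hasDerivAt_rpow_const (Or.inl (ne_of_gt hy0)))).sub_const _).const_mul _
        have h2 : M / ρ * (ρ * y ^ (ρ - 1)) = M * y ^ (ρ - 1) := by
          field_simp
        exact (h2 ▸ this).hasDerivWithinAt
      · intro y hy
        have hy0 : (0:ℝ) < y := lt_of_lt_of_le hε0 hy.1
        have hyD : y ∈ Dom := mem_Dom (by linarith [Real.pi_pos]) (le_trans (le_of_lt hy.2) hbπ) (ne_of_gt hy0)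
        have := hb y hyD
        rwa [abs_of_pos hy0] at this
    exact main b ⟨hεb, le_refl _⟩
  -- limit ε → 0⁺
  have htend : Filter.Tendsto (fun ε => ‖F b - F ε‖) (nhdsWithin 0 (Set.Ioi 0)) (𝓝 ‖F b - F 0‖) := by
    exact ((hcont.tendsto 0).const_sub (F b)).norm.mono_left nhdsWithin_le_nhds
  refine le_of_tendsto htend ?_
  filter_upwards [Ioc_mem_nhdsGT hb0] with ε hε
  refine le_trans (key ε hε) ?_
  have : (0:ℝ) ≤ ε ^ ρ := Real.rpow_nonneg (le_of_lt hε.1) _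
  have hMρ : 0 < M / ρ := div_pos hM hρ0
  nlinarith

end aux

section aux2
variable {E : Type*} [NormedAddCommGroup E] [NormedSpace ℝ E]

private lemma cusp_holder (ρ M : ℝ) (hρ : ρ ∈ Set.Ioo (0:ℝ) 1) (hM : 0 < M)
    (F F' : ℝ → E) (hcont : Continuous F)
    (hF' : ∀ θ ∈ Dom, HasDerivWithinAt F (F' θ) Dom θ)
    (hb : ∀ θ ∈ Dom, ‖F' θ‖ ≤ M * |θ| ^ (ρ - 1)) :
    ∀ b ∈ Set.Icc (-π) π, ‖F b - F 0‖ ≤ (M/ρ) * |b| ^ ρ := by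
  intro b hbm
  rcases lt_trichotomy b 0 with hneg | rfl | hpos
  · -- use the reflected function
    set G : ℝ → E := fun x => F (-x) with hG
    set G' : ℝ → E := fun x => (-1 : ℝ) • F' (-x) with hG'
    have hDomneg : ∀ x ∈ Dom, -x ∈ Dom := by
      rintro x ⟨⟨h1, h2⟩, h3⟩
      exact mem_Dom (by linarith) (by linarith) (by simpa using (Set.mem_singleton_iff.not.1 h3))
    have hG'd : ∀ θ ∈ Dom, HasDerivWithinAt G (G' θ) Dom θ := by
      intro θ hθ
      exact HasDerivWithinAt.scomp θ (hF' (-θ) (hDomneg θ hθ))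
        ((hasDerivAt_neg θ).hasDerivWithinAt) hDomneg
    have hGb : ∀ θ ∈ Dom, ‖G' θ‖ ≤ M * |θ| ^ (ρ - 1) := by
      intro θ hθ
      have := hb (-θ) (hDomneg θ hθ)
      simpa [hG', norm_smul, abs_neg] using this
    have := cusp_pos ρ M hρ hM G G' (hcont.comp continuous_neg) hG'd hGb (-b)
      ⟨by linarith, by linarith [hbm.1]⟩
    simp only [hG, neg_neg, neg_zero] at this
    rwa [abs_of_neg hneg]
  · simp [Real.zero_rpow (ne_of_gt hρ.1), mul_comm]
  · have := cusp_pos ρ M hρ hM F F' hcont hF' hb b ⟨hpos, hbm.2⟩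
    rwa [abs_of_pos hpos]

end aux2

section aux3
variable {E : Type*} [NormedAddCommGroup E] [NormedSpace ℝ E]

private lemma second_diff (F F' F'' : ℝ → E) {s : Set ℝ} (hs : Convex ℝ s)
    (hF' : ∀ x ∈ s, HasDerivWithinAt F (F' x) s x)
    (hF'' : ∀ x ∈ s, HasDerivWithinAt F' (F'' x) s x)
    {K : ℝ} (hK : ∀ x ∈ s, ‖F'' x‖ ≤ K)
    {a δ : ℝ} (hδ : 0 ≤ δ) (ha : a ∈ s) (ha2 : a + 2*δ ∈ s) :
    ‖F a - (2:ℝ) • F (a+δ) + F (a+2*δ)‖ ≤ K * δ^2 := by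
  have hsub : Set.Icc a (a+2*δ) ⊆ s := hs.ordConnected.out ha ha2
  have hK0 : 0 ≤ K := le_trans (norm_nonneg _) (hK a ha)
  -- first-difference of the derivative
  have hd1 : ∀ x ∈ Set.Icc a (a+δ), ‖F' (x+δ) - F' x‖ ≤ K * δ := by
    intro x hx
    have h1 : x ∈ s := hsub ⟨hx.1, by linarith [hx.2]⟩
    have h2 : x + δ ∈ s := hsub ⟨by linarith [hx.1], by linarith [hx.2]⟩
    have := hs.norm_image_sub_le_of_norm_hasDerivWithin_le hF'' hK h1 h2
    calc ‖F' (x+δ) - F' x‖ ≤ K * ‖(x+δ) - x‖ := this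
    _ = K * δ := by rw [add_sub_cancel_left, Real.norm_eq_abs, abs_of_nonneg hδ]
  -- the function g
  set g : ℝ → E := fun x => F (x+δ) - F x with hgdef
  have hg' : ∀ x ∈ Set.Icc a (a+δ), HasDerivWithinAt g (F' (x+δ) - F' x) (Set.Icc a (a+δ)) x := by
    intro x hx
    have hmaps : Set.MapsTo (fun x => x + δ) (Set.Icc a (a+δ)) s := by
      intro y hy
      show y + δ ∈ s
      exact hsub ⟨by linarith [hy.1], by linarith [hy.2]⟩
    have h2 : x + δ ∈ s := hmaps hx
    have hcomp : HasDerivWithinAt (fun x => F (x+δ)) ((1:ℝ) • F' (x+δ)) (Set.Icc a (a+δ)) x :=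
      HasDerivWithinAt.scomp x (hF' (x+δ) h2)
        ((hasDerivAt_id x).add_const δ).hasDerivWithinAt hmaps
    rw [one_smul] at hcomp
    exact hcomp.sub ((hF' x (hsub ⟨hx.1, by linarith [hx.2]⟩)).mono
      (fun y hy => hsub ⟨hy.1, by linarith [hy.2]⟩))
  have key : ‖g (a+δ) - g a‖ ≤ (K * δ) * ‖(a+δ) - a‖ :=
    (convex_Icc a (a+δ)).norm_image_sub_le_of_norm_hasDerivWithin_le hg' hd1
      ⟨le_refl _, by linarith⟩ ⟨by linarith, le_refl _⟩
  have heq : g (a+δ) - g a = F a - (2:ℝ) • F (a+δ) + F (a+2*δ) := by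
    simp only [hgdef]
    have : a + δ + δ = a + 2*δ := by ring
    rw [this, two_smul]
    abel
  rw [heq] at key
  calc ‖F a - (2:ℝ) • F (a+δ) + F (a+2*δ)‖ ≤ (K*δ) * ‖(a+δ) - a‖ := key
  _ = K * δ^2 := by rw [add_sub_cancel_left, Real.norm_eq_abs, abs_of_nonneg hδ]; ring

end aux3

section aux4
variable {E : Type*} [NormedAddCommGroup E] [NormedSpace ℝ E]

private lemma lip_near_pi (ρ M : ℝ) (hρ : ρ ∈ Set.Ioo (0:ℝ) 1) (hM : 0 < M)
    (F F' : ℝ → E) (hper : Function.Periodic F (2*π))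
    (hF' : ∀ θ ∈ Dom, HasDerivWithinAt F (F' θ) Dom θ)
    (hb : ∀ θ ∈ Dom, ‖F' θ‖ ≤ M * |θ| ^ (ρ - 1)) :
    ∀ a ∈ Set.Icc (π/2) (3*π/2), ∀ b ∈ Set.Icc (π/2) (3*π/2),
      ‖F b - F a‖ ≤ (M * (π/2)^(ρ-1)) * |b - a| := by
  have hπ := Real.pi_pos
  set L : ℝ := M * (π/2)^(ρ-1) with hL
  have hL0 : 0 ≤ L := mul_nonneg hM.le (Real.rpow_nonneg (by linarith) _)
  -- piece 1 : [π/2, π]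
  have hs1 : Set.Icc (π/2) π ⊆ Dom := by
    rintro x ⟨h1, h2⟩
    exact mem_Dom (by linarith) h2 (ne_of_gt (by linarith))
  have bound1 : ∀ x ∈ Set.Icc (π/2) π, ‖F' x‖ ≤ L := by
    rintro x ⟨h1, h2⟩
    refine le_trans (hb x (hs1 ⟨h1, h2⟩)) ?_
    rw [hL, abs_of_pos (by linarith)]
    exact mul_le_mul_of_nonneg_left
      (Real.rpow_le_rpow_of_nonpos (by linarith) h1 (by linarith [hρ.2])) hM.le
  have p1 : ∀ x ∈ Set.Icc (π/2) π, ∀ y ∈ Set.Icc (π/2) π, ‖F y - F x‖ ≤ L * |y - x| := by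
    intro x hx y hy
    have := (convex_Icc (π/2) π).norm_image_sub_le_of_norm_hasDerivWithin_le
      (fun z hz => (hF' z (hs1 hz)).mono hs1) bound1 hx hy
    rwa [Real.norm_eq_abs] at this
  -- piece 2 : [π, 3π/2], via periodicity
  have hFeq : (fun x => F (x - 2*π)) = F := by
    funext x
    have := hper (x - 2*π)
    rw [sub_add_cancel] at this
    exact this.symm
  have hs2 : ∀ x ∈ Set.Icc π (3*π/2), x - 2*π ∈ Dom := by
    rintro x ⟨h1, h2⟩
    exact mem_Dom (by linarith) (by linarith) (ne_of_lt (by linarith))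
  have hF2 : ∀ x ∈ Set.Icc π (3*π/2),
      HasDerivWithinAt F (F' (x - 2*π)) (Set.Icc π (3*π/2)) x := by
    intro x hx
    have hmaps : Set.MapsTo (fun x => x - 2*π) (Set.Icc π (3*π/2)) Dom := fun y hy => hs2 y hy
    have hcomp : HasDerivWithinAt (fun x => F (x - 2*π)) ((1:ℝ) • F' (x - 2*π))
        (Set.Icc π (3*π/2)) x :=
      HasDerivWithinAt.scomp x (hF' (x - 2*π) (hs2 x hx))
        ((hasDerivAt_id x).sub_const (2*π)).hasDerivWithinAt hmaps
    rw [one_smul, hFeq] at hcomp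
    exact hcomp
  have bound2 : ∀ x ∈ Set.Icc π (3*π/2), ‖F' (x - 2*π)‖ ≤ L := by
    rintro x hx
    refine le_trans (hb _ (hs2 x hx)) ?_
    rw [hL, abs_of_neg (by rcases hx with ⟨h1, h2⟩; linarith)]
    refine mul_le_mul_of_nonneg_left
      (Real.rpow_le_rpow_of_nonpos (by linarith) (by rcases hx with ⟨h1, h2⟩; linarith) (by linarith [hρ.2])) hM.le
  have p2 : ∀ x ∈ Set.Icc π (3*π/2), ∀ y ∈ Set.Icc π (3*π/2), ‖F y - F x‖ ≤ L * |y - x| := by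
    intro x hx y hy
    have := (convex_Icc π (3*π/2)).norm_image_sub_le_of_norm_hasDerivWithin_le
      hF2 bound2 hx hy
    rwa [Real.norm_eq_abs] at this
  -- combine
  have main : ∀ a ∈ Set.Icc (π/2) (3*π/2), ∀ b ∈ Set.Icc (π/2) (3*π/2), a ≤ b →
      ‖F b - F a‖ ≤ L * |b - a| := by
    rintro a ⟨ha1, ha2⟩ b ⟨hb1, hb2⟩ hab
    rcases le_total b π with hbπ | hπb
    · exact p1 a ⟨ha1, hbπ.trans' hab⟩ b ⟨hb1, hbπ⟩
    · rcases le_total π a with hπa | haπ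
      · exact p2 a ⟨hπa, ha2⟩ b ⟨hπa.trans hab, hb2⟩
      · calc ‖F b - F a‖ ≤ ‖F b - F π‖ + ‖F π - F a‖ := norm_sub_le_norm_sub_add_norm_sub _ _ _
        _ ≤ L * |b - π| + L * |(π:ℝ) - a| := by
            gcongr ?_ + ?_
            · exact p2 π ⟨le_refl _, by linarith⟩ b ⟨hπb, hb2⟩
            · exact p1 a ⟨ha1, haπ⟩ π ⟨by linarith, le_refl _⟩
        _ ≤ L * |b - a| := by
            rw [abs_of_nonneg (by linarith), abs_of_nonneg (by linarith), abs_of_nonneg (by linarith)]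
            nlinarith
  intro a ha b hb
  rcases le_total a b with hab | hba
  · exact main a ha b hb hab
  · rw [norm_sub_rev, abs_sub_comm]
    exact main b hb a ha hba

end aux4

section aux5
variable {E : Type*} [NormedAddCommGroup E] [NormedSpace ℂ E]

private lemma integrand_periodic (F : ℝ → E) (hper : Function.Periodic F (2*π)) (h : ℤ) :
    Function.Periodic (fun u : ℝ => Complex.exp (-(h:ℂ)*(u:ℂ)*Complex.I) • F u) (2*π) := by
  intro u
  have hexp : Complex.exp (-(h:ℂ)*((u + 2*π : ℝ):ℂ)*Complex.I)
      = Complex.exp (-(h:ℂ)*(u:ℂ)*Complex.I) := by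
    have : -(h:ℂ)*((u + 2*π : ℝ):ℂ)*Complex.I
        = -(h:ℂ)*(u:ℂ)*Complex.I + (-h : ℤ) * (2*(π:ℂ) * Complex.I) := by
      push_cast
      ring
    rw [this, Complex.exp_add, Complex.exp_int_mul_two_pi_mul_I, mul_one]
  simp only [hexp, hper u]

private lemma integrand_cont [CompleteSpace E] (F : ℝ → E) (hcont : Continuous F) (h : ℤ) :
    Continuous (fun u : ℝ => Complex.exp (-(h:ℂ)*(u:ℂ)*Complex.I) • F u) := by
  apply Continuous.smul _ hcont
  exact Complex.continuous_exp.comp (by continuity)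

private lemma shift_int [CompleteSpace E] (F : ℝ → E) (hper : Function.Periodic F (2*π))
    (hcont : Continuous F) (h : ℤ) (s : ℝ) :
    (∫ θ in (-π)..π, Complex.exp (-(h:ℂ)*(θ:ℂ)*Complex.I) • F (θ+s))
      = Complex.exp ((h:ℂ)*(s:ℂ)*Complex.I) •
        ∫ θ in (-π)..π, Complex.exp (-(h:ℂ)*(θ:ℂ)*Complex.I) • F θ := by
  have step1 : (∫ θ in (-π)..π, Complex.exp (-(h:ℂ)*(θ:ℂ)*Complex.I) • F (θ+s))
      = ∫ θ in (-π)..π, Complex.exp ((h:ℂ)*(s:ℂ)*Complex.I) •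
          (Complex.exp (-(h:ℂ)*((θ+s : ℝ):ℂ)*Complex.I) • F (θ+s)) := by
    refine intervalIntegral.integral_congr ?_
    intro θ _
    beta_reduce
    rw [smul_smul, ← Complex.exp_add]
    congr 2
    push_cast
    ring
  rw [step1, intervalIntegral.integral_smul]
  congr 1
  have step2 : (∫ θ in (-π)..π, Complex.exp (-(h:ℂ)*((θ+s : ℝ):ℂ)*Complex.I) • F (θ+s))
      = ∫ u in (-π+s)..(π+s), Complex.exp (-(h:ℂ)*(u:ℂ)*Complex.I) • F u := by
    exact intervalIntegral.integral_comp_add_right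
      (fun u : ℝ => Complex.exp (-(h:ℂ)*(u:ℂ)*Complex.I) • F u) s
  rw [step2]
  have hper2 := integrand_periodic F hper h
  have := hper2.intervalIntegral_add_eq (-π+s) (-π)
  rw [show (-π+s) + 2*π = π + s by ring, show -π + 2*π = π by ring] at this
  exact this

end aux5

section main
variable {E : Type*} [NormedAddCommGroup E] [NormedSpace ℂ E] [CompleteSpace E]

set_option maxHeartbeats 1000000 in
private lemma main_est (ρ M : ℝ) (hρ : ρ ∈ Set.Ioo (0:ℝ) 1) (hM : 0 < M)
    (F F' F'' : ℝ → E)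
    (hper : Function.Periodic F (2*π)) (hcont : Continuous F)
    (hF' : ∀ θ ∈ Dom, HasDerivWithinAt F (F' θ) Dom θ)
    (hF'' : ∀ θ ∈ Dom, HasDerivWithinAt F' (F'' θ) Dom θ)
    (hb1 : ∀ θ ∈ Dom, ‖F' θ‖ ≤ M * |θ| ^ (ρ - 1))
    (hb2 : ∀ θ ∈ Dom, ‖F'' θ‖ ≤ M * |θ| ^ (ρ - 2))
    (h : ℤ) (hh : h ≠ 0) :
    ‖∫ θ in (-π)..π, Complex.exp (-(h : ℂ) * (θ : ℂ) * Complex.I) • F θ‖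
      ≤ (512*(M/ρ) + 3*(96*(M/ρ) + 2*(M/(1-ρ)) + 8*M)) * |(h:ℝ)| ^ (-1 - ρ) := by
  have hπ := Real.pi_pos
  have hπ1 := Real.pi_le_four
  have hπ2 := Real.pi_gt_three
  obtain ⟨hρ0, hρ1⟩ := hρ
  have habs1 : (1:ℝ) ≤ |(h:ℝ)| := by
    rw [← Int.cast_abs]
    exact_mod_cast Int.one_le_abs hh
  have habs0 : (0:ℝ) < |(h:ℝ)| := by linarith
  set c : E := ∫ θ in (-π)..π, Complex.exp (-(h : ℂ) * (θ : ℂ) * Complex.I) • F θ with hc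
  -- the target power
  have hpow0 : (0:ℝ) < |(h:ℝ)| ^ (-1 - ρ) := Real.rpow_pos_of_pos habs0 _
  -- the cusp Hölder bound
  have hcusp := cusp_holder ρ M ⟨hρ0, hρ1⟩ hM F F' hcont hF' hb1
  have hhr : ((h:ℝ)) ≠ 0 := Int.cast_ne_zero.mpr hh
  have hMρ : (0:ℝ) < M/ρ := div_pos hM hρ0
  have hM1ρ : (0:ℝ) < M/(1-ρ) := div_pos hM (by linarith)
  have hnorm1 : ∀ θ:ℝ, ‖Complex.exp (-(h:ℂ)*(θ:ℂ)*Complex.I)‖ = 1 := by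
    intro θ
    rw [show -(h:ℂ)*(θ:ℂ)*Complex.I = ((-h*θ:ℝ):ℂ)*Complex.I by push_cast; ring,
      Complex.norm_exp_ofReal_mul_I]
  rcases le_or_gt 4 |(h:ℝ)| with hbig | hsmall
  case inr =>
    -- small |h| : crude bound
    have crude : ‖c‖ ≤ (M/ρ) * π ^ ρ * (2*π) := by
      have hzero : (∫ θ in (-π)..π, Complex.exp (-(h:ℂ)*(θ:ℂ)*Complex.I)) = 0 := by
        have harg : ∀ θ:ℝ, Complex.exp (-(h:ℂ)*(θ:ℂ)*Complex.I)
            = Complex.exp ((-(h:ℂ)*Complex.I)*(θ:ℂ)) := by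
          intro θ; congr 1; ring
        simp only [harg]
        rw [integral_exp_mul_complex (by
          simp [Complex.ext_iff, Complex.I_ne_zero, Int.cast_ne_zero.mpr hh,
            (Int.cast_ne_zero (α := ℂ)).mpr hh])]
        have hee : Complex.exp ((-(h:ℂ)*Complex.I)*(π:ℂ))
            = Complex.exp ((-(h:ℂ)*Complex.I)*((-π:ℝ):ℂ)) := by
          rw [Complex.exp_eq_exp_iff_exists_int]
          exact ⟨-h, by push_cast; ring⟩
        rw [hee, sub_self, zero_div]
      have hsplit : c = ∫ θ in (-π)..π, Complex.exp (-(h:ℂ)*(θ:ℂ)*Complex.I) • (F θ - F 0) := by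
        have hi1 : IntervalIntegrable
            (fun θ:ℝ => Complex.exp (-(h:ℂ)*(θ:ℂ)*Complex.I) • F θ) volume (-π) π :=
          (integrand_cont F hcont h).intervalIntegrable _ _
        have hi2 : IntervalIntegrable
            (fun θ:ℝ => Complex.exp (-(h:ℂ)*(θ:ℂ)*Complex.I) • F 0) volume (-π) π :=
          (integrand_cont (fun _ => F 0) continuous_const h).intervalIntegrable _ _
        have : (∫ θ in (-π)..π, Complex.exp (-(h:ℂ)*(θ:ℂ)*Complex.I) • (F θ - F 0))
            = (∫ θ in (-π)..π, Complex.exp (-(h:ℂ)*(θ:ℂ)*Complex.I) • F θ)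
              - ∫ θ in (-π)..π, Complex.exp (-(h:ℂ)*(θ:ℂ)*Complex.I) • F 0 := by
          rw [← intervalIntegral.integral_sub hi1 hi2]
          refine intervalIntegral.integral_congr fun θ _ => ?_
          simp [smul_sub]
        rw [this, intervalIntegral.integral_smul_const, hzero, zero_smul, sub_zero, hc]
      rw [hsplit]
      have := intervalIntegral.norm_integral_le_of_norm_le_const
        (C := (M/ρ) * π ^ ρ)
        (f := fun θ:ℝ => Complex.exp (-(h:ℂ)*(θ:ℂ)*Complex.I) • (F θ - F 0)) (a := -π) (b := π) ?_
      · calc _ ≤ (M/ρ) * π ^ ρ * |π - (-π)| := this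
        _ = (M/ρ) * π ^ ρ * (2*π) := by rw [abs_of_pos (by linarith)]; ring
      · intro θ hθ
        rw [Set.uIoc_of_le (by linarith)] at hθ
        rw [norm_smul, hnorm1, one_mul]
        refine le_trans (hcusp θ ⟨hθ.1.le, hθ.2⟩) ?_
        have h1 : |θ| ^ ρ ≤ π ^ ρ :=
          Real.rpow_le_rpow (abs_nonneg _) (abs_le.2 ⟨by linarith [hθ.1], hθ.2⟩) hρ0.le
        exact mul_le_mul_of_nonneg_left h1 hMρ.le
    have hp : (4:ℝ) ^ (-2:ℝ) ≤ |(h:ℝ)| ^ (-1 - ρ) := by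
      have h1 : (4:ℝ)^(-2:ℝ) ≤ (4:ℝ)^(-1-ρ) :=
        Real.rpow_le_rpow_of_exponent_le (by norm_num) (by linarith)
      have h2 : (4:ℝ)^(-1-ρ) ≤ |(h:ℝ)|^(-1-ρ) :=
        Real.rpow_le_rpow_of_nonpos habs0 hsmall.le (by linarith)
      exact h1.trans h2
    have h416 : (4:ℝ) ^ (-2:ℝ) = 1/16 := by
      rw [show (-2:ℝ) = ((-2:ℤ):ℝ) by norm_num, Real.rpow_intCast]
      norm_num
    have hπρ : π ^ ρ ≤ 4 := by
      calc π ^ ρ ≤ π ^ (1:ℝ) := Real.rpow_le_rpow_of_exponent_le (by linarith) (by linarith)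
      _ = π := Real.rpow_one π
      _ ≤ 4 := hπ1
    have hMρ : (0:ℝ) < M/ρ := div_pos hM hρ0
    have hM1ρ.le : (0:ℝ) ≤ M/(1-ρ) := le_of_lt (div_pos hM (by linarith))
    calc ‖c‖ ≤ (M/ρ) * π ^ ρ * (2*π) := crude
    _ ≤ (M/ρ) * 4 * (2*4) := by gcongr <;> linarith
    _ = (512*(M/ρ)) * (1/16) := by ring
    _ ≤ (512*(M/ρ) + 3*(96*(M/ρ) + 2*(M/(1-ρ)) + 8*M)) * (1/16) := by nlinarith
    _ ≤ (512*(M/ρ) + 3*(96*(M/ρ) + 2*(M/(1-ρ)) + 8*M)) * |(h:ℝ)| ^ (-1 - ρ) := by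
        have hC0 : (0:ℝ) ≤ 512*(M/ρ) + 3*(96*(M/ρ) + 2*(M/(1-ρ)) + 8*M) := by nlinarith
        rw [← h416]
        exact mul_le_mul_of_nonneg_left hp hC0
  case inl =>
    set δ : ℝ := π / |(h:ℝ)| with hδdef
    have hδ0 : 0 < δ := div_pos hπ habs0
    have hδ4 : δ ≤ π/4 := div_le_div_of_nonneg_left hπ.le (by norm_num) hbig
    have hσ : (h:ℝ) * δ = π ∨ (h:ℝ) * δ = -π := by
      rcases hh.lt_or_gt with hneg | hpos
      · right
        have habs : |(h:ℝ)| = -(h:ℝ) := abs_of_neg (by exact_mod_cast hneg)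
        rw [hδdef, habs, div_neg, mul_neg, mul_comm, div_mul_cancel₀ _ hhr]
      · left
        have habs : |(h:ℝ)| = (h:ℝ) := abs_of_pos (by exact_mod_cast hpos)
        rw [hδdef, habs, mul_comm, div_mul_cancel₀ _ hhr]
    have harg : (h:ℂ)*((δ:ℝ):ℂ)*Complex.I = (((h:ℝ)*δ : ℝ):ℂ)*Complex.I := by push_cast; ring
    have e1 : Complex.exp ((h:ℂ)*((δ:ℝ):ℂ)*Complex.I) = -1 := by
      rcases hσ with h1 | h1
      · rw [harg, h1]
        exact Complex.exp_pi_mul_I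
      · rw [harg, h1]
        push_cast
        rw [show (-(π:ℂ))*Complex.I = -((π:ℂ)*Complex.I) by ring, Complex.exp_neg,
          Complex.exp_pi_mul_I]
        norm_num
    have e2 : Complex.exp ((h:ℂ)*((2*δ:ℝ):ℂ)*Complex.I) = 1 := by
      have harg2 : (h:ℂ)*((2*δ:ℝ):ℂ)*Complex.I
          = (h:ℂ)*((δ:ℝ):ℂ)*Complex.I + (h:ℂ)*((δ:ℝ):ℂ)*Complex.I := by push_cast; ring
      rw [harg2, Complex.exp_add, e1]
      norm_num
    set Φ : ℝ → E := fun θ => F θ - (2:ℝ) • F (θ+δ) + F (θ+2*δ) with hΦ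
    have hΦc : Continuous Φ := by
      refine Continuous.add (Continuous.sub hcont ?_) ?_
      · exact ((hcont.comp (continuous_id.add continuous_const))).const_smul _
      · exact hcont.comp (continuous_id.add continuous_const)
    have int1 : (∫ θ in (-π)..π, Complex.exp (-(h:ℂ)*(θ:ℂ)*Complex.I) • F (θ+δ)) = -c := by
      rw [shift_int F hper hcont h δ, e1, ← hc, neg_one_smul]
    have int2 : (∫ θ in (-π)..π, Complex.exp (-(h:ℂ)*(θ:ℂ)*Complex.I) • F (θ+2*δ)) = c := by
      rw [shift_int F hper hcont h (2*δ), e2, ← hc, one_smul]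
    have hexpc : Continuous (fun θ:ℝ => Complex.exp (-(h:ℂ)*(θ:ℂ)*Complex.I)) :=
      Complex.continuous_exp.comp
        ((continuous_const.mul Complex.continuous_ofReal).mul continuous_const)
    have hcont1 : Continuous (fun θ:ℝ => Complex.exp (-(h:ℂ)*(θ:ℂ)*Complex.I) • F (θ+δ)) :=
      hexpc.smul (hcont.comp (continuous_id.add continuous_const))
    have hcont2 : Continuous (fun θ:ℝ => Complex.exp (-(h:ℂ)*(θ:ℂ)*Complex.I) • F (θ+2*δ)) :=
      hexpc.smul (hcont.comp (continuous_id.add continuous_const))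
    have hc4 : (∫ θ in (-π)..π, Complex.exp (-(h:ℂ)*(θ:ℂ)*Complex.I) • Φ θ) = (4:ℝ) • c := by
      have expand : (fun θ:ℝ => Complex.exp (-(h:ℂ)*(θ:ℂ)*Complex.I) • Φ θ)
          = fun θ:ℝ => (Complex.exp (-(h:ℂ)*(θ:ℂ)*Complex.I) • F θ
              - (2:ℝ) • (Complex.exp (-(h:ℂ)*(θ:ℂ)*Complex.I) • F (θ+δ)))
              + Complex.exp (-(h:ℂ)*(θ:ℂ)*Complex.I) • F (θ+2*δ) := by
        funext θ
        simp only [hΦ, smul_sub, smul_add]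
        rw [smul_comm]
      rw [expand, intervalIntegral.integral_add
          (f := fun θ:ℝ => Complex.exp (-(h:ℂ)*(θ:ℂ)*Complex.I) • F θ
              - (2:ℝ) • (Complex.exp (-(h:ℂ)*(θ:ℂ)*Complex.I) • F (θ+δ)))
          (((integrand_cont F hcont h).sub (hcont1.const_smul (2:ℝ))).intervalIntegrable _ _)
          (hcont2.intervalIntegrable _ _),
        intervalIntegral.integral_sub
          (g := fun θ:ℝ => (2:ℝ) • (Complex.exp (-(h:ℂ)*(θ:ℂ)*Complex.I) • F (θ+δ)))
          ((integrand_cont F hcont h).intervalIntegrable _ _)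
          ((hcont1.const_smul _).intervalIntegrable _ _),
        intervalIntegral.integral_smul, int1, int2, ← hc]
      module
    have hnormc : 4 * ‖c‖ ≤ ∫ θ in (-π)..π, ‖Φ θ‖ := by
      have h1 : ‖(4:ℝ) • c‖ = 4 * ‖c‖ := by
        rw [norm_smul, Real.norm_eq_abs, abs_of_pos (by norm_num : (0:ℝ) < 4)]
      rw [← h1, ← hc4]
      refine le_trans (intervalIntegral.norm_integral_le_integral_norm (by linarith)) ?_
      refine le_of_eq (intervalIntegral.integral_congr fun θ _ => ?_)
      beta_reduce
      rw [norm_smul, hnorm1 θ, one_mul]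
    have hInt : ∀ a b : ℝ, IntervalIntegrable (fun θ => ‖Φ θ‖) volume a b :=
      fun a b => (hΦc.norm).intervalIntegrable _ _
    have esplit1 := intervalIntegral.integral_add_adjacent_intervals
      (hInt (-π) (-(4*δ))) (hInt (-(4*δ)) π)
    have esplit2 := intervalIntegral.integral_add_adjacent_intervals
      (hInt (-(4*δ)) (2*δ)) (hInt (2*δ) π)
    have esplit3 := intervalIntegral.integral_add_adjacent_intervals
      (hInt (2*δ) (π-2*δ)) (hInt (π-2*δ) π)
    have hδδ : δ^(2:ℕ) * δ^(ρ-1) = δ^(1+ρ) := by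
      rw [← Real.rpow_natCast δ 2, ← Real.rpow_add hδ0]
      congr 1
      push_cast
      ring
    have hδ1 : δ * δ^ρ = δ^(1+ρ) := by
      rw [Real.rpow_add hδ0, Real.rpow_one]
    have hA0 : (0:ℝ) ≤ (2*δ)^(ρ-1) := Real.rpow_nonneg (by linarith) _
    have hB0 : (0:ℝ) ≤ (π-2*δ)^(ρ-1) := Real.rpow_nonneg (by linarith) _
    have hA1 : (2*δ)^(ρ-1) ≤ δ^(ρ-1) := by
      rw [Real.mul_rpow (by norm_num) hδ0.le]
      have h2 : (2:ℝ)^(ρ-1) ≤ 1 :=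
        Real.rpow_le_one_of_one_le_of_nonpos (by norm_num) (by linarith)
      nlinarith [Real.rpow_nonneg hδ0.le (ρ-1), Real.rpow_pos_of_pos hδ0 (ρ-1)]
    have hrpowint : (∫ θ in (2*δ)..(π-2*δ), θ^(ρ-2)) ≤ δ^(ρ-1) / (1-ρ) := by
      rw [integral_rpow (Or.inr ⟨by linarith, by
        intro hmem
        rw [Set.uIcc_of_le (by linarith)] at hmem
        exact absurd hmem.1 (by linarith)⟩)]
      rw [show ρ - 2 + 1 = ρ - 1 by ring]
      have e : ((π-2*δ)^(ρ-1) - (2*δ)^(ρ-1))/(ρ-1)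
          = ((2*δ)^(ρ-1) - (π-2*δ)^(ρ-1))/(1-ρ) := by
        rw [show ρ-1 = -(1-ρ) by ring, div_neg, ← neg_div, neg_sub]
      rw [e]
      have h1ρ : (0:ℝ) < 1 - ρ := by linarith
      have : ((2*δ)^(ρ-1) - (π-2*δ)^(ρ-1))/(1-ρ) ≤ (2*δ)^(ρ-1)/(1-ρ) := by
        gcongr
        linarith
      refine this.trans ?_
      gcongr
    -- pointwise bound on region [2δ, π-2δ]
    have pb3 : ∀ θ ∈ Set.Icc (2*δ) (π-2*δ), ‖Φ θ‖ ≤ M * θ^(ρ-2) * δ^2 := by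
      intro θ hθ
      have hsub : Set.Icc θ (θ+2*δ) ⊆ Dom := by
        rintro x ⟨hx1, hx2⟩
        exact mem_Dom (by linarith [hθ.1]) (by linarith [hθ.2])
          (ne_of_gt (by linarith [hθ.1]))
      have hK : ∀ x ∈ Set.Icc θ (θ+2*δ), ‖F'' x‖ ≤ M * θ^(ρ-2) := by
        rintro x ⟨hx1, hx2⟩
        refine le_trans (hb2 x (hsub ⟨hx1, hx2⟩)) ?_
        have h0θ : (0:ℝ) < θ := by linarith [hθ.1]
        rw [abs_of_pos (by linarith)]
        exact mul_le_mul_of_nonneg_left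
          (Real.rpow_le_rpow_of_nonpos h0θ hx1 (by linarith)) hM.le
      have := second_diff F F' F'' (convex_Icc θ (θ+2*δ))
        (fun x hx => (hF' x (hsub hx)).mono hsub)
        (fun x hx => (hF'' x (hsub hx)).mono hsub) hK hδ0.le
        ⟨le_refl _, by linarith⟩ ⟨by linarith, le_refl _⟩
      simpa only [hΦ] using this
    -- pointwise bound on region [-π, -4δ]
    have pb1 : ∀ θ ∈ Set.Icc (-π) (-(4*δ)), ‖Φ θ‖ ≤ M * (-θ - 2*δ)^(ρ-2) * δ^2 := by
      intro θ hθ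
      have hsub : Set.Icc θ (θ+2*δ) ⊆ Dom := by
        rintro x ⟨hx1, hx2⟩
        exact mem_Dom (by linarith [hθ.1]) (by linarith [hθ.2])
          (ne_of_lt (by linarith [hθ.2]))
      have hK : ∀ x ∈ Set.Icc θ (θ+2*δ), ‖F'' x‖ ≤ M * (-θ - 2*δ)^(ρ-2) := by
        rintro x ⟨hx1, hx2⟩
        refine le_trans (hb2 x (hsub ⟨hx1, hx2⟩)) ?_
        have hx0 : x < 0 := by linarith [hθ.2]
        have h0θ : (0:ℝ) < -θ - 2*δ := by linarith [hθ.2]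
        rw [abs_of_neg hx0]
        exact mul_le_mul_of_nonneg_left
          (Real.rpow_le_rpow_of_nonpos h0θ (by linarith) (by linarith)) hM.le
      have := second_diff F F' F'' (convex_Icc θ (θ+2*δ))
        (fun x hx => (hF' x (hsub hx)).mono hsub)
        (fun x hx => (hF'' x (hsub hx)).mono hsub) hK hδ0.le
        ⟨le_refl _, by linarith⟩ ⟨by linarith, le_refl _⟩
      simpa only [hΦ] using this
    -- pointwise bound on region [-4δ, 2δ]
    have pb2 : ∀ θ ∈ Set.Icc (-(4*δ)) (2*δ), ‖Φ θ‖ ≤ 16*(M/ρ)*δ^ρ := by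
      intro θ hθ
      have h4δ : 4*δ ≤ π := by linarith
      have heq : Φ θ = (F θ - F 0) - (2:ℝ)•(F (θ+δ) - F 0) + (F (θ+2*δ) - F 0) := by
        simp only [hΦ]
        module
      have hd1 : ‖F θ - F 0‖ ≤ (M/ρ) * (4*δ)^ρ := by
        refine le_trans (hcusp θ ⟨by linarith [hθ.1], by linarith [hθ.2]⟩) ?_
        exact mul_le_mul_of_nonneg_left (Real.rpow_le_rpow (abs_nonneg _)
          (abs_le.2 ⟨by linarith [hθ.1], by linarith [hθ.2]⟩) hρ0.le) hMρ.le
      have hd2 : ‖F (θ+δ) - F 0‖ ≤ (M/ρ) * (4*δ)^ρ := by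
        refine le_trans (hcusp (θ+δ) ⟨by linarith [hθ.1], by linarith [hθ.2]⟩) ?_
        exact mul_le_mul_of_nonneg_left (Real.rpow_le_rpow (abs_nonneg _)
          (abs_le.2 ⟨by linarith [hθ.1], by linarith [hθ.2]⟩) hρ0.le) hMρ.le
      have hd3 : ‖F (θ+2*δ) - F 0‖ ≤ (M/ρ) * (4*δ)^ρ := by
        refine le_trans (hcusp (θ+2*δ) ⟨by linarith [hθ.1], by linarith [hθ.2]⟩) ?_
        exact mul_le_mul_of_nonneg_left (Real.rpow_le_rpow (abs_nonneg _)
          (abs_le.2 ⟨by linarith [hθ.1], by linarith [hθ.2]⟩) hρ0.le) hMρ.le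
      have h1 := norm_add_le ((F θ - F 0) - (2:ℝ)•(F (θ+δ) - F 0)) (F (θ+2*δ) - F 0)
      have h2 := norm_sub_le (F θ - F 0) ((2:ℝ)•(F (θ+δ) - F 0))
      have h3 : ‖(2:ℝ)•(F (θ+δ) - F 0)‖ = 2*‖F (θ+δ) - F 0‖ := by
        rw [norm_smul]
        simp
      have h4ρ : (4*δ)^ρ ≤ 4*δ^ρ := by
        rw [Real.mul_rpow (by norm_num) hδ0.le]
        have : (4:ℝ)^ρ ≤ 4 := by
          have := Real.rpow_le_rpow_of_exponent_le (by norm_num : (1:ℝ) ≤ 4) hρ1.le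
          rwa [Real.rpow_one] at this
        nlinarith [Real.rpow_nonneg hδ0.le ρ]
      rw [heq]
      have hδρ : (0:ℝ) ≤ δ^ρ := Real.rpow_nonneg hδ0.le ρ
      nlinarith [h1, h2, h3, hd1, hd2, hd3]
    -- pointwise bound on region [π-2δ, π]
    have pb4 : ∀ θ ∈ Set.Icc (π-2*δ) π, ‖Φ θ‖ ≤ 2*(M*(π/2)^(ρ-1))*δ := by
      intro θ hθ
      have hlip := lip_near_pi ρ M ⟨hρ0, hρ1⟩ hM F F' hper hF' hb1
      have hm1 : θ ∈ Set.Icc (π/2) (3*π/2) := ⟨by linarith [hθ.1], by linarith [hθ.2]⟩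
      have hm2 : θ+δ ∈ Set.Icc (π/2) (3*π/2) := ⟨by linarith [hθ.1], by linarith [hθ.2]⟩
      have hm3 : θ+2*δ ∈ Set.Icc (π/2) (3*π/2) := ⟨by linarith [hθ.1], by linarith [hθ.2]⟩
      have heq : Φ θ = (F θ - F (θ+δ)) + (F (θ+2*δ) - F (θ+δ)) := by
        simp only [hΦ]
        module
      have hd1 : ‖F θ - F (θ+δ)‖ ≤ (M*(π/2)^(ρ-1))*δ := by
        have := hlip (θ+δ) hm2 θ hm1
        rwa [show θ - (θ+δ) = -δ by ring, abs_neg, abs_of_pos hδ0] at this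
      have hd2 : ‖F (θ+2*δ) - F (θ+δ)‖ ≤ (M*(π/2)^(ρ-1))*δ := by
        have := hlip (θ+δ) hm2 (θ+2*δ) hm3
        rwa [show θ+2*δ - (θ+δ) = δ by ring, abs_of_pos hδ0] at this
      rw [heq]
      have := norm_add_le (F θ - F (θ+δ)) (F (θ+2*δ) - F (θ+δ))
      linarith
    -- integral bounds
    have b1 : (∫ θ in (-π)..(-(4*δ)), ‖Φ θ‖) ≤ (M/(1-ρ)) * δ^(1+ρ) := by
      have hgc : ContinuousOn (fun θ:ℝ => M * (-θ - 2*δ)^(ρ-2) * δ^2)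
          (Set.uIcc (-π) (-(4*δ))) := by
        rw [Set.uIcc_of_le (by linarith)]
        refine (continuousOn_const.mul ?_).mul continuousOn_const
        intro x hx
        exact (ContinuousAt.continuousWithinAt
          ((Real.continuousAt_rpow_const _ _ (Or.inl (by simp only [Set.mem_Icc] at hx; intro hq; nlinarith [hx.1, hx.2]))).comp
            (by fun_prop)))
      have hmono := intervalIntegral.integral_mono_on (by linarith : -π ≤ -(4*δ))
        (hInt _ _) (hgc.intervalIntegrable) pb1
      refine hmono.trans ?_
      have hpull : (∫ θ in (-π)..(-(4*δ)), M * (-θ - 2*δ)^(ρ-2) * δ^2)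
          = (M * δ^2) * ∫ θ in (-π)..(-(4*δ)), (-θ - 2*δ)^(ρ-2) := by
        rw [← intervalIntegral.integral_const_mul]
        refine intervalIntegral.integral_congr fun θ _ => ?_
        ring
      have hsub1 : (∫ θ in (-π)..(-(4*δ)), (-θ - 2*δ)^(ρ-2))
          = ∫ v in (2*δ)..(π-2*δ), v^(ρ-2) := by
        rw [intervalIntegral.integral_comp_neg (fun u => (u - 2*δ)^(ρ-2)), neg_neg, neg_neg,
          intervalIntegral.integral_comp_sub_right (fun v => v^(ρ-2)) (2*δ),
          show 4*δ - 2*δ = 2*δ by ring]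
      rw [hpull, hsub1]
      calc (M * δ^2) * ∫ v in (2*δ)..(π-2*δ), v^(ρ-2)
          ≤ (M * δ^2) * (δ^(ρ-1)/(1-ρ)) := by
            refine mul_le_mul_of_nonneg_left hrpowint (by positivity)
      _ = (M/(1-ρ)) * (δ^(2:ℕ) * δ^(ρ-1)) := by ring
      _ = (M/(1-ρ)) * δ^(1+ρ) := by rw [hδδ]
    have b3 : (∫ θ in (2*δ)..(π-2*δ), ‖Φ θ‖) ≤ (M/(1-ρ)) * δ^(1+ρ) := by
      have hgc : ContinuousOn (fun θ:ℝ => M * θ^(ρ-2) * δ^2)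
          (Set.uIcc (2*δ) (π-2*δ)) := by
        rw [Set.uIcc_of_le (by linarith)]
        refine (continuousOn_const.mul ?_).mul continuousOn_const
        intro x hx
        exact (Real.continuousAt_rpow_const _ _
          (Or.inl (ne_of_gt (by simp only [Set.mem_Icc] at hx; linarith [hx.1])))).continuousWithinAt
      have hmono := intervalIntegral.integral_mono_on (by linarith : 2*δ ≤ π-2*δ)
        (hInt _ _) (hgc.intervalIntegrable) pb3
      refine hmono.trans ?_
      have hpull : (∫ θ in (2*δ)..(π-2*δ), M * θ^(ρ-2) * δ^2)
          = (M * δ^2) * ∫ θ in (2*δ)..(π-2*δ), θ^(ρ-2) := by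
        rw [← intervalIntegral.integral_const_mul]
        refine intervalIntegral.integral_congr fun θ _ => ?_
        ring
      rw [hpull]
      calc (M * δ^2) * ∫ v in (2*δ)..(π-2*δ), v^(ρ-2)
          ≤ (M * δ^2) * (δ^(ρ-1)/(1-ρ)) := by
            refine mul_le_mul_of_nonneg_left hrpowint (by positivity)
      _ = (M/(1-ρ)) * (δ^(2:ℕ) * δ^(ρ-1)) := by ring
      _ = (M/(1-ρ)) * δ^(1+ρ) := by rw [hδδ]
    have b2 : (∫ θ in (-(4*δ))..(2*δ), ‖Φ θ‖) ≤ 96*(M/ρ) * δ^(1+ρ) := by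
      have hmono := intervalIntegral.integral_mono_on (by linarith : -(4*δ) ≤ 2*δ)
        (hInt _ _) (intervalIntegrable_const) pb2
      refine hmono.trans ?_
      rw [intervalIntegral.integral_const, smul_eq_mul]
      refine le_of_eq ?_
      calc (2*δ - -(4*δ)) * (16*(M/ρ)*δ^ρ) = 96*(M/ρ) * (δ * δ^ρ) := by ring
      _ = 96*(M/ρ) * δ^(1+ρ) := by rw [hδ1]
    have b4 : (∫ θ in (π-2*δ)..π, ‖Φ θ‖) ≤ 8*M * δ^(1+ρ) := by
      have hmono := intervalIntegral.integral_mono_on (by linarith : π-2*δ ≤ π)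
        (hInt _ _) (intervalIntegrable_const) pb4
      refine hmono.trans ?_
      rw [intervalIntegral.integral_const, smul_eq_mul]
      have hq1 : δ ≤ π/2 := by linarith
      have hq2 : ρ - 1 ≤ 0 := by linarith
      have hLd : (π/2)^(ρ-1) ≤ δ^(ρ-1) :=
        Real.rpow_le_rpow_of_nonpos hδ0 hq1 hq2
      calc (π - (π-2*δ)) * (2*(M*(π/2)^(ρ-1))*δ)
          = 4*M*((π/2)^(ρ-1)) * δ^(2:ℕ) := by ring
      _ ≤ 4*M*(δ^(ρ-1)) * δ^(2:ℕ) := by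
          have hq : (0:ℝ) ≤ δ^(2:ℕ) := by positivity
          have h4M : (0:ℝ) ≤ 4*M := by linarith
          exact mul_le_mul_of_nonneg_right (mul_le_mul_of_nonneg_left hLd h4M) hq
      _ = 4*M*(δ^(2:ℕ) * δ^(ρ-1)) := by ring
      _ = 4*M*δ^(1+ρ) := by rw [hδδ]
      _ ≤ 8*M * δ^(1+ρ) := by
          have := Real.rpow_pos_of_pos hδ0 (1+ρ)
          nlinarith [this.le, hM.le]
    have hδpow : δ^(1+ρ) ≤ 10 * |(h:ℝ)|^(-1-ρ) := by
      rw [hδdef, Real.div_rpow hπ.le habs0.le,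
        show (-1-ρ : ℝ) = -(1+ρ) by ring, Real.rpow_neg habs0.le, div_eq_mul_inv]
      have hp2 : π^(1+ρ:ℝ) ≤ 10 := by
        have h1 : π^(1+ρ:ℝ) ≤ π^(2:ℝ) :=
          Real.rpow_le_rpow_of_exponent_le (by linarith) (by linarith)
        have h3 : π^(2:ℝ) ≤ 10 := by
          rw [show (2:ℝ) = ((2:ℕ):ℝ) by norm_num, Real.rpow_natCast]
          nlinarith [Real.pi_lt_d2]
        linarith
      have hinv : (0:ℝ) ≤ (|(h:ℝ)|^(1+ρ:ℝ))⁻¹ :=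
        inv_nonneg.2 (Real.rpow_nonneg (abs_nonneg _) _)
      exact mul_le_mul_of_nonneg_right hp2 hinv
    have hδρ0 : (0:ℝ) < δ^(1+ρ) := Real.rpow_pos_of_pos hδ0 _
    have hC1 : (0:ℝ) ≤ 96*(M/ρ) + 2*(M/(1-ρ)) + 8*M := by
      linarith [hMρ.le, hM1ρ.le, hM.le]
    have stepA : ‖c‖ ≤ (96*(M/ρ) + 2*(M/(1-ρ)) + 8*M) * δ^(1+ρ) / 4 := by linarith
    have stepB : (96*(M/ρ) + 2*(M/(1-ρ)) + 8*M) * δ^(1+ρ) / 4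
        ≤ (96*(M/ρ) + 2*(M/(1-ρ)) + 8*M) * (10 * |(h:ℝ)|^(-1-ρ)) / 4 := by
      linarith [mul_le_mul_of_nonneg_left hδpow hC1]
    refine stepA.trans (stepB.trans ?_)
    have e1' : (0:ℝ) ≤ (M/ρ) * |(h:ℝ)|^(-1-ρ) := mul_nonneg hMρ.le hpow0.le
    have e2' : (0:ℝ) ≤ (M/(1-ρ)) * |(h:ℝ)|^(-1-ρ) := mul_nonneg hM1ρ.le hpow0.le
    have e3' : (0:ℝ) ≤ M * |(h:ℝ)|^(-1-ρ) := mul_nonneg hM.le hpow0.le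
    have expand : (512*(M/ρ) + 3*(96*(M/ρ) + 2*(M/(1-ρ)) + 8*M)) * |(h:ℝ)| ^ (-1 - ρ)
        = 512*((M/ρ) * |(h:ℝ)|^(-1-ρ)) + 288*((M/ρ) * |(h:ℝ)|^(-1-ρ))
          + 6*((M/(1-ρ)) * |(h:ℝ)|^(-1-ρ)) + 24*(M * |(h:ℝ)|^(-1-ρ)) := by ring
    have expand2 : (96*(M/ρ) + 2*(M/(1-ρ)) + 8*M) * (10 * |(h:ℝ)|^(-1-ρ)) / 4
        = 240*((M/ρ) * |(h:ℝ)|^(-1-ρ)) + 5*((M/(1-ρ)) * |(h:ℝ)|^(-1-ρ))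
          + 20*(M * |(h:ℝ)|^(-1-ρ)) := by ring
    rw [expand, expand2]
    linarith [e1', e2', e3']

end main

/-- Fourier-coefficient decay for a periodic vector-valued function with a cusp at `0`:
if `F` is continuous, `2π`-periodic, twice continuously differentiable on `[−π,π] ∖ {0}` with
`‖F′(θ)‖ ≤ M|θ|^{ρ−1}` and `‖F″(θ)‖ ≤ M|θ|^{ρ−2}`, then
`‖∫ F(θ)e^{−ihθ} dθ‖ ≤ C|h|^{−1−ρ}` with `C` depending only on `M` and `ρ`. -/
theorem stmt_4
    (ρ : ℝ) (hρ : ρ ∈ Set.Ioo (0 : ℝ) 1) (M : ℝ) (hM : 0 < M) :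
    ∃ C : ℝ, ∀ n : ℕ, 1 ≤ n →
      ∀ F F' F'' : ℝ → EuclideanSpace ℂ (Fin n),
      Function.Periodic F (2 * π) →
      Continuous F →
      (∀ θ ∈ Set.Icc (-π) π \ {0}, HasDerivWithinAt F (F' θ) (Set.Icc (-π) π \ {0}) θ) →
      (∀ θ ∈ Set.Icc (-π) π \ {0}, HasDerivWithinAt F' (F'' θ) (Set.Icc (-π) π \ {0}) θ) →
      ContinuousOn F' (Set.Icc (-π) π \ {0}) →
      ContinuousOn F'' (Set.Icc (-π) π \ {0}) →
      (∀ θ ∈ Set.Icc (-π) π \ {0}, ‖F' θ‖ ≤ M * |θ| ^ (ρ - 1)) →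
      (∀ θ ∈ Set.Icc (-π) π \ {0}, ‖F'' θ‖ ≤ M * |θ| ^ (ρ - 2)) →
      ∀ h : ℤ, h ≠ 0 →
        ‖∫ θ in (-π)..π, Complex.exp (-(h : ℂ) * (θ : ℂ) * Complex.I) • F θ‖
          ≤ C * |(h : ℝ)| ^ (-1 - ρ) := by
  refine ⟨512*(M/ρ) + 3*(96*(M/ρ) + 2*(M/(1-ρ)) + 8*M), ?_⟩
  intro n _ F F' F'' hper hcont hF' hF'' _ _ hb1 hb2 h hh
  exact main_est ρ M hρ hM F F' F'' hper hcont hF' hF'' hb1 hb2 h hh
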